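/- Let v₁, v₂, v₃ ≥ 0, λ > 0 and ρ ∈ (0,1] with λρ < 1. Let Z₁, Z₂, Z₃ be independent centered Gaussian random variables with variances v₁, v₂, v₃ respectively, and let φ(u) = (2π)^{−1/2} e^{−u²/2} denote the standard Gaussian density. Then ∫_ℝ E_{Z₃}[ E_{Z₁}[ φ(y − Z₃ − Z₁)^{1−λρ} ] · ( E_{Z₂}[ φ(y − Z₃ − Z₂)^{λ} ] )^{ρ} ] dy = (1 + λ v₂)^{(1−ρ)/2} · ( 1 + λ(1−λρ) v₂ + λρ(1−λρ) v₁ )^{−1/2}. In particular the value does not depend on v₃. -/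

import Mathlib

open MeasureTheory ProbabilityTheory

open Real
open scoped NNReal ENNReal

lemma int_quad {b : ℝ} (hb : 0 < b) (c : ℝ) :
    ∫ x : ℝ, rexp (-b * x ^ 2 + c * x) = Real.sqrt (π / b) * rexp (c ^ 2 / (4 * b)) := by
  have h : ∀ x : ℝ, -b * x ^ 2 + c * x = -b * (x - c / (2 * b)) ^ 2 + c ^ 2 / (4 * b) := by
    intro x; field_simp; ring
  simp_rw [h, Real.exp_add, integral_mul_const]
  rw [integral_sub_right_eq_self (fun x => rexp (-b * x ^ 2)) (c / (2 * b)),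
    integral_gaussian, mul_comm]

lemma integral_gaussianReal_pdf {μ : ℝ} {v : ℝ≥0} (hv : v ≠ 0) (g : ℝ → ℝ) :
    ∫ x, g x ∂(gaussianReal μ v) = ∫ x, gaussianPDFReal μ v x * g x := by
  rw [gaussianReal_of_var_ne_zero μ hv]
  have : (gaussianPDF μ v) = fun x => ((gaussianPDFReal μ v x).toNNReal : ℝ≥0∞) := rfl
  rw [this, integral_withDensity_eq_integral_smul
    ((measurable_gaussianPDFReal μ v).real_toNNReal) g]
  congr 1; ext x
  rw [NNReal.smul_def, smul_eq_mul, Real.coe_toNNReal _ (gaussianPDFReal_nonneg _ _ _)]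

lemma gauss_conv {α v : ℝ} (hα : 0 < α) (hv : 0 ≤ v) (x : ℝ) :
    ∫ z, rexp (-(α * (x - z) ^ 2) / 2) ∂(gaussianReal 0 v.toNNReal)
      = (1 + α * v) ^ (-(1/2) : ℝ) * rexp (-(α / (1 + α * v) * x ^ 2) / 2) := by
  rcases eq_or_lt_of_le hv with h0 | h0
  · rw [← h0]
    simp only [Real.toNNReal_zero, gaussianReal_zero_var, integral_dirac, mul_zero, add_zero,
      Real.one_rpow, one_mul, sub_zero, div_one]
  · have hv' : v.toNNReal ≠ 0 := by simp [Real.toNNReal_eq_zero, not_le, h0]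
    have hav : 0 < 1 + α * v := by positivity
    rw [integral_gaussianReal_pdf hv']
    simp only [gaussianPDFReal, sub_zero]
    have hc : (v.toNNReal : ℝ) = v := Real.coe_toNNReal _ hv
    simp_rw [hc]
    have h : ∀ z : ℝ, (√(2 * π * v))⁻¹ * rexp (-z ^ 2 / (2 * v)) * rexp (-(α * (x - z) ^ 2) / 2)
        = rexp (-(α * x ^ 2) / 2) * ((√(2 * π * v))⁻¹ *
            rexp (-((1 + α * v) / (2 * v)) * z ^ 2 + (α * x) * z)) := by
      intro z
      have hee : rexp (-z ^ 2 / (2 * v)) * rexp (-(α * (x - z) ^ 2) / 2)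
          = rexp (-(α * x ^ 2) / 2) * rexp (-((1 + α * v) / (2 * v)) * z ^ 2 + (α * x) * z) := by
        rw [← Real.exp_add, ← Real.exp_add]
        congr 1
        field_simp
        ring
      rw [mul_assoc, hee]
      ring
    simp_rw [h]
    rw [integral_const_mul, integral_const_mul, int_quad (by positivity) (α * x)]
    rw [show (α * x) ^ 2 / (4 * ((1 + α * v) / (2 * v))) = α * x ^ 2 * v * α / (2 * (1 + α * v))
      from by field_simp; ring]
    have hs : (√(2 * π * v))⁻¹ * √(π / ((1 + α * v) / (2 * v))) = (1 + α * v) ^ (-(1/2) : ℝ) := by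
      rw [Real.rpow_neg hav.le, ← Real.sqrt_eq_rpow, ← Real.sqrt_inv, ← Real.sqrt_inv,
        ← Real.sqrt_mul (by positivity)]
      congr 1
      field_simp
    have hexp : rexp (-(α * x ^ 2) / 2) * rexp (α * x ^ 2 * v * α / (2 * (1 + α * v)))
        = rexp (-(α / (1 + α * v) * x ^ 2) / 2) := by
      rw [← Real.exp_add]; congr 1; field_simp; ring
    rw [← hs, ← hexp]; ring

lemma inner_int {p v : ℝ} (hp : 0 < p) (hv : 0 ≤ v) (x : ℝ) :
    ∫ z, (rexp (-(x - z) ^ 2 / 2) / Real.sqrt (2 * π)) ^ p ∂(gaussianReal 0 v.toNNReal)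
      = (2 * π) ^ (-p / 2) *
        ((1 + p * v) ^ (-(1/2) : ℝ) * rexp (-(p / (1 + p * v) * x ^ 2) / 2)) := by
  have h : ∀ z : ℝ, (rexp (-(x - z) ^ 2 / 2) / Real.sqrt (2 * π)) ^ p
      = (2 * π) ^ (-p / 2) * rexp (-(p * (x - z) ^ 2) / 2) := by
    intro z
    rw [Real.div_rpow (Real.exp_pos _).le (Real.sqrt_nonneg _), ← Real.exp_mul,
      Real.sqrt_eq_rpow, ← Real.rpow_mul (by positivity), div_eq_mul_inv,
      ← Real.rpow_neg (by positivity), mul_comm]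
    congr 1
    · ring
    · ring
  simp_rw [h]
  rw [integral_const_mul, gauss_conv hp hv x]

/-- The Gallager-type moment `m_{λ,ρ}`: with `φ` the standard Gaussian density and
independent `Z₁ ~ N(0,v₁)`, `Z₂ ~ N(0,v₂)`, `Z₃ ~ N(0,v₃)`,
`∫ E_{Z₃}[E_{Z₁}[φ(y-Z₃-Z₁)^{1-λρ}] (E_{Z₂}[φ(y-Z₃-Z₂)^λ])^ρ] dy
  = (1+λv₂)^{(1-ρ)/2} (1+λ(1-λρ)v₂+λρ(1-λρ)v₁)^{-1/2}`,
independently of `v₃`. -/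
theorem stmt12 (v₁ v₂ v₃ lam ρ : ℝ) (hv₁ : 0 ≤ v₁) (hv₂ : 0 ≤ v₂) (hv₃ : 0 ≤ v₃)
    (hlam : 0 < lam) (hρ : ρ ∈ Set.Ioc (0 : ℝ) 1) (hlr : lam * ρ < 1) :
    (∫ y : ℝ,
      ∫ z₃,
        (∫ z₁, (Real.exp (-(y - z₃ - z₁) ^ 2 / 2) / Real.sqrt (2 * Real.pi))
            ^ (1 - lam * ρ) ∂(gaussianReal 0 v₁.toNNReal))
          * (∫ z₂, (Real.exp (-(y - z₃ - z₂) ^ 2 / 2) / Real.sqrt (2 * Real.pi))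
              ^ lam ∂(gaussianReal 0 v₂.toNNReal)) ^ ρ
        ∂(gaussianReal 0 v₃.toNNReal))
    = (1 + lam * v₂) ^ ((1 - ρ) / 2) *
        (1 + lam * (1 - lam * ρ) * v₂ + lam * ρ * (1 - lam * ρ) * v₁) ^ (-(1 / 2) : ℝ) := by
  obtain ⟨hρ0, hρ1⟩ := hρ
  have hp₁ : 0 < 1 - lam * ρ := by linarith
  have hA : 0 < 1 + (1 - lam * ρ) * v₁ := by positivity
  have hB : 0 < 1 + lam * v₂ := by positivity
  have ha : 0 < (1 - lam * ρ) / (1 + (1 - lam * ρ) * v₁) + ρ * (lam / (1 + lam * v₂)) := by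
    positivity
  have h2π : (0:ℝ) < 2 * π := by positivity
  simp_rw [inner_int hp₁ hv₁, inner_int hlam hv₂]
  have key : ∀ u : ℝ,
      ((2*π) ^ (-(1 - lam * ρ)/2) * ((1 + (1 - lam * ρ) * v₁) ^ (-(1/2) : ℝ) *
          rexp (-((1 - lam * ρ) / (1 + (1 - lam * ρ) * v₁) * u ^ 2) / 2)))
        * ((2*π) ^ (-lam/2) * ((1 + lam * v₂) ^ (-(1/2) : ℝ) *
            rexp (-(lam / (1 + lam * v₂) * u ^ 2) / 2))) ^ ρ
      = ((2*π) ^ (-(1/2) : ℝ) * ((1 + (1 - lam * ρ) * v₁) ^ (-(1/2) : ℝ) *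
          (1 + lam * v₂) ^ (-(1/2) * ρ : ℝ)))
          * rexp (-(((1 - lam * ρ) / (1 + (1 - lam * ρ) * v₁) + ρ * (lam / (1 + lam * v₂)))
              * u ^ 2) / 2) := by
    intro u
    rw [Real.mul_rpow (x := (2*π) ^ (-lam/2))
        (y := (1 + lam * v₂) ^ (-(1/2) : ℝ) * rexp (-(lam / (1 + lam * v₂) * u ^ 2) / 2))
        (by positivity) (by positivity),
      Real.mul_rpow (x := (1 + lam * v₂) ^ (-(1/2) : ℝ))
        (y := rexp (-(lam / (1 + lam * v₂) * u ^ 2) / 2)) (by positivity) (Real.exp_pos _).le,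
      ← Real.rpow_mul h2π.le, ← Real.rpow_mul hB.le, ← Real.exp_mul]
    have h2 : (2*π) ^ (-(1 - lam * ρ)/2) * (2*π) ^ (-lam/2*ρ) = (2*π) ^ (-(1/2) : ℝ) := by
      rw [← Real.rpow_add h2π]; congr 1; ring
    have hE : rexp (-((1 - lam * ρ) / (1 + (1 - lam * ρ) * v₁) * u ^ 2) / 2)
          * rexp (-(lam / (1 + lam * v₂) * u ^ 2) / 2 * ρ)
        = rexp (-(((1 - lam * ρ) / (1 + (1 - lam * ρ) * v₁) + ρ * (lam / (1 + lam * v₂)))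
            * u ^ 2) / 2) := by
      rw [← Real.exp_add]; congr 1; ring
    calc ((2*π) ^ (-(1 - lam * ρ)/2) * ((1 + (1 - lam * ρ) * v₁) ^ (-(1/2) : ℝ) *
            rexp (-((1 - lam * ρ) / (1 + (1 - lam * ρ) * v₁) * u ^ 2) / 2)))
          * ((2*π) ^ (-lam/2*ρ) * ((1 + lam * v₂) ^ (-(1/2) * ρ : ℝ) *
            rexp (-(lam / (1 + lam * v₂) * u ^ 2) / 2 * ρ)))
        = ((2*π) ^ (-(1 - lam * ρ)/2) * (2*π) ^ (-lam/2*ρ))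
            * ((1 + (1 - lam * ρ) * v₁) ^ (-(1/2) : ℝ) * (1 + lam * v₂) ^ (-(1/2) * ρ : ℝ))
            * (rexp (-((1 - lam * ρ) / (1 + (1 - lam * ρ) * v₁) * u ^ 2) / 2)
              * rexp (-(lam / (1 + lam * v₂) * u ^ 2) / 2 * ρ)) := by ring
      _ = _ := by rw [h2, hE]
  simp_rw [key, integral_const_mul, gauss_conv ha hv₃]
  have hexp2 : ∀ y : ℝ,
      rexp (-(((1 - lam * ρ) / (1 + (1 - lam * ρ) * v₁) + ρ * (lam / (1 + lam * v₂)))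
          / (1 + ((1 - lam * ρ) / (1 + (1 - lam * ρ) * v₁) + ρ * (lam / (1 + lam * v₂))) * v₃)
          * y ^ 2) / 2)
      = rexp (-(((1 - lam * ρ) / (1 + (1 - lam * ρ) * v₁) + ρ * (lam / (1 + lam * v₂)))
          / (1 + ((1 - lam * ρ) / (1 + (1 - lam * ρ) * v₁) + ρ * (lam / (1 + lam * v₂))) * v₃)
          / 2) * y ^ 2) := by
    intro y; congr 1; ring
  simp_rw [hexp2, integral_const_mul]
  rw [integral_gaussian]
  -- pure algebra from here
  set A : ℝ := 1 + (1 - lam * ρ) * v₁ with hAdef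
  set B : ℝ := 1 + lam * v₂ with hBdef
  set a : ℝ := (1 - lam * ρ) / A + ρ * (lam / B) with hadef
  set T : ℝ := 1 + a * v₃ with hTdef
  set D : ℝ := 1 + lam * (1 - lam * ρ) * v₂ + lam * ρ * (1 - lam * ρ) * v₁ with hDdef
  have hT : 0 < T := by rw [hTdef]; positivity
  have hD : 0 < D := by
    have h1 : 0 ≤ lam * (1 - lam * ρ) * v₂ :=
      mul_nonneg (mul_nonneg hlam.le hp₁.le) hv₂
    have h2 : 0 ≤ lam * ρ * (1 - lam * ρ) * v₁ :=
      mul_nonneg (mul_nonneg (mul_nonneg hlam.le hρ0.le) hp₁.le) hv₁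
    rw [hDdef]; linarith
  have haD : a = D / (A * B) := by
    rw [hadef, hDdef, hAdef, hBdef]; field_simp; ring
  have hsq : √(π / (a / T / 2)) = (2*π) ^ ((1/2) : ℝ) * (T ^ ((1/2) : ℝ) * a ^ (-(1/2) : ℝ)) := by
    rw [show π / (a / T / 2) = 2 * π * T * a⁻¹ from by field_simp,
      Real.sqrt_eq_rpow, Real.mul_rpow (by positivity) (by positivity),
      Real.mul_rpow h2π.le hT.le, Real.inv_rpow ha.le, ← Real.rpow_neg ha.le, mul_assoc]
  have haf : a ^ (-(1/2) : ℝ) = D ^ (-(1/2) : ℝ) * (A ^ ((1/2) : ℝ) * B ^ ((1/2) : ℝ)) := by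
    rw [haD, Real.div_rpow hD.le (by positivity), Real.mul_rpow hA.le hB.le, div_eq_mul_inv,
      mul_inv, ← Real.rpow_neg hA.le, ← Real.rpow_neg hB.le, neg_neg]
  have hc : ∀ x : ℝ, 0 < x → x ^ (-(1/2) : ℝ) * x ^ ((1/2) : ℝ) = 1 := by
    intro x hx; rw [← Real.rpow_add hx]; norm_num
  have hBfin : B ^ (-(1/2) * ρ : ℝ) * B ^ ((1/2) : ℝ) = B ^ ((1 - ρ)/2 : ℝ) := by
    rw [← Real.rpow_add hB]; congr 1; ring
  rw [hsq, haf]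
  calc (2*π) ^ (-(1/2) : ℝ) * (A ^ (-(1/2) : ℝ) * B ^ (-(1/2) * ρ : ℝ)) *
        (T ^ (-(1/2) : ℝ) * ((2*π) ^ ((1/2) : ℝ) * (T ^ ((1/2) : ℝ) *
          (D ^ (-(1/2) : ℝ) * (A ^ ((1/2) : ℝ) * B ^ ((1/2) : ℝ))))))
      = ((2*π) ^ (-(1/2) : ℝ) * (2*π) ^ ((1/2) : ℝ)) * (T ^ (-(1/2) : ℝ) * T ^ ((1/2) : ℝ)) *
        (A ^ (-(1/2) : ℝ) * A ^ ((1/2) : ℝ)) * (B ^ (-(1/2) * ρ : ℝ) * B ^ ((1/2) : ℝ)) *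
        D ^ (-(1/2) : ℝ) := by ring
    _ = B ^ ((1 - ρ)/2 : ℝ) * D ^ (-(1/2) : ℝ) := by
        rw [hc _ h2π, hc _ hT, hc _ hA, hBfin]; ring
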